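/- arXiv:2507.15485 — 6 statements merged into one kernel-verified Lean document; each statement's English description precedes it below -/
import Mathlib

section
/- Let φ: ℝ → ℝ be continuously differentiable on a closed interval I with endpoints αₗ and αᵤ, μ ∈ (0,1), and ψ(α) = φ(α) − (φ(0) + μ·φ'(0)·α). If ψ(αₗ) ≤ ψ(αᵤ), ψ(αₗ) ≤ 0, and ψ'(αₗ)·(αᵤ − αₗ) < 0, then there exists α⋆ ∈ I with ψ(α⋆) ≤ ψ(αₗ) and ψ'(α⋆) = 0. -/
open Filter Set Topology

lemma aux_lt (ψ : ℝ → ℝ) (hd : Differentiable ℝ ψ) (l u : ℝ) (hlu : l < u)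
    (h1 : ψ l ≤ ψ u) (hneg : deriv ψ l < 0) :
    ∃ s ∈ Set.Icc l u, ψ s ≤ ψ l ∧ deriv ψ s = 0 := by
  have hcont : Continuous ψ := hd.continuous
  obtain ⟨x, hx, hxl⟩ : ∃ x ∈ Set.Ioo l u, ψ x < ψ l := by
    have hder : HasDerivAt ψ (deriv ψ l) l := (hd l).hasDerivAt
    have hslope : Tendsto (slope ψ l) (𝓝[>] l) (𝓝 (deriv ψ l)) :=
      (hasDerivAt_iff_tendsto_slope.mp hder).mono_left
        (nhdsWithin_mono _ (fun x hx => ne_of_gt hx))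
    have hev : ∀ᶠ x in 𝓝[>] l, slope ψ l x < 0 :=
      hslope.eventually (gt_mem_nhds hneg)
    have hIoo : Set.Ioo l u ∈ 𝓝[>] l := Ioo_mem_nhdsGT_of_mem ⟨le_refl l, hlu⟩
    obtain ⟨x, hsl, hxm⟩ := (hev.and (eventually_of_mem hIoo (fun x hx => hx))).exists
    refine ⟨x, hxm, ?_⟩
    have hxl : l < x := hxm.1
    have : (ψ x - ψ l) / (x - l) < 0 := by
      simpa [slope_def_field, div_eq_iff] using hsl
    rcases div_neg_iff.mp this with ⟨_, h⟩ | ⟨h, _⟩ <;> linarith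
  obtain ⟨s, hs, hmin⟩ := isCompact_Icc.exists_isMinOn ⟨l, le_refl l, le_of_lt hlu⟩
    hcont.continuousOn
  have hsx : ψ s ≤ ψ x := hmin ⟨le_of_lt hx.1, le_of_lt hx.2⟩
  have hsl : ψ s < ψ l := lt_of_le_of_lt hsx hxl
  have hsne_l : s ≠ l := fun h => absurd hsl (by simp [h])
  have hsne_u : s ≠ u := fun h => absurd (lt_of_lt_of_le hsl h1) (by simp [h])
  have hs' : s ∈ Set.Ioo l u := ⟨lt_of_le_of_ne hs.1 (Ne.symm hsne_l),
    lt_of_le_of_ne hs.2 hsne_u⟩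
  have hloc : IsLocalMin ψ s := hmin.isLocalMin (Icc_mem_nhds hs'.1 hs'.2)
  exact ⟨s, hs, le_of_lt hsl, hloc.deriv_eq_zero⟩

theorem stmt_2 (φ : ℝ → ℝ) (hφ : ContDiff ℝ 1 φ)
    (μ : ℝ) (hμ0 : 0 < μ) (hμ1 : μ < 1)
    (ψ : ℝ → ℝ) (hψ : ψ = fun α => φ α - (φ 0 + μ * deriv φ 0 * α))
    (αl αu : ℝ)
    (h1 : ψ αl ≤ ψ αu) (h2 : ψ αl ≤ 0) (h3 : deriv ψ αl * (αu - αl) < 0) :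
    ∃ αs ∈ Set.uIcc αl αu, ψ αs ≤ ψ αl ∧ deriv ψ αs = 0 := by
  have hd : Differentiable ℝ ψ := by
    subst hψ
    exact (hφ.differentiable one_ne_zero).sub
      ((differentiable_const _).add ((differentiable_id.const_mul _)))
  rcases lt_trichotomy αl αu with hlt | heq | hgt
  · have hneg : deriv ψ αl < 0 := by nlinarith
    obtain ⟨s, hs, h⟩ := aux_lt ψ hd αl αu hlt h1 hneg
    exact ⟨s, by rwa [Set.uIcc_of_le (le_of_lt hlt)], h⟩
  · simp [heq] at h3
  · set g : ℝ → ℝ := fun x => ψ (-x) with hg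
    have hgd : Differentiable ℝ g := hd.comp differentiable_neg
    have hgderiv : ∀ x, deriv g x = -deriv ψ (-x) := fun x => deriv_comp_neg ψ x
    have hpos : 0 < deriv ψ αl := by nlinarith
    have hneg : deriv g (-αl) < 0 := by rw [hgderiv]; simpa using hpos
    have h1' : g (-αl) ≤ g (-αu) := by simpa [hg] using h1
    obtain ⟨s, hs, hle, hder⟩ := aux_lt g hgd (-αl) (-αu) (by linarith) h1' hneg
    refine ⟨-s, ?_, by simpa [hg] using hle, ?_⟩
    · rw [Set.uIcc_of_ge (le_of_lt hgt)]
      exact ⟨by linarith [hs.2], by linarith [hs.1]⟩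
    · have := hgderiv s
      rw [hder] at this
      linarith [this]
end

section
/- Let φ: ℝ → ℝ be continuously differentiable on the closed interval [αₗ, αᵤ] with αₗ < αᵤ, μ ∈ (0,1), and ψ(α) = φ(α) − (φ(0) + μ·φ'(0)·α). If ψ(αₗ) ≤ 0 and ψ'(αₗ) < 0, and either ψ(αᵤ) ≥ ψ(αₗ) or ψ'(αᵤ) ≥ 0, then there exists α⋆ ∈ [αₗ, αᵤ] with ψ(α⋆) ≤ ψ(αₗ) and ψ'(α⋆) = 0. -/
open Topology Filter Set

theorem stmt_4 (φ : ℝ → ℝ) (hφ : ContDiff ℝ 1 φ)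
    (μ : ℝ) (hμ0 : 0 < μ) (hμ1 : μ < 1)
    (ψ : ℝ → ℝ) (hψ : ψ = fun α => φ α - (φ 0 + μ * deriv φ 0 * α))
    (αl αu : ℝ) (hlt : αl < αu)
    (h1 : ψ αl ≤ 0) (h2 : deriv ψ αl < 0)
    (h3 : ψ αl ≤ ψ αu ∨ 0 ≤ deriv ψ αu) :
    ∃ αs ∈ Set.Icc αl αu, ψ αs ≤ ψ αl ∧ deriv ψ αs = 0 := by
  have hφd : Differentiable ℝ φ := hφ.differentiable one_ne_zero
  have hψd : Differentiable ℝ ψ := by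
    rw [hψ]
    exact hφd.sub (by fun_prop)
  have hcont : ContinuousOn ψ (Set.Icc αl αu) := hψd.continuous.continuousOn
  obtain ⟨c, hc, hmin⟩ := (isCompact_Icc).exists_isMinOn
    (Set.nonempty_Icc.2 hlt.le) hcont
  -- there exists x with ψ x < ψ αl
  have hslope : Filter.Tendsto (slope ψ αl) (𝓝[≠] αl) (𝓝 (deriv ψ αl)) :=
    hasDerivAt_iff_tendsto_slope.1 (hψd αl).hasDerivAt
  have hslope' : Filter.Tendsto (slope ψ αl) (𝓝[>] αl) (𝓝 (deriv ψ αl)) :=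
    hslope.mono_left (nhdsWithin_mono _ fun x hx => ne_of_gt hx)
  have hev : ∀ᶠ x in 𝓝[>] αl, slope ψ αl x < 0 :=
    hslope'.eventually (eventually_lt_nhds h2)
  have hev2 : Set.Ioo αl αu ∈ 𝓝[>] αl := Ioo_mem_nhdsGT_of_mem ⟨le_rfl, hlt⟩
  obtain ⟨x, hx1, hx2⟩ := (hev.and (Filter.eventually_of_mem hev2 fun _ h => h)).exists
  have hxlt : ψ x < ψ αl := by
    have hpos : 0 < x - αl := sub_pos.2 hx2.1
    have := hx1
    rw [slope_def_field, div_neg_iff] at this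
    rcases this with ⟨h', h''⟩ | ⟨h', h''⟩
    · linarith
    · linarith
  have hcx : ψ c < ψ αl := lt_of_le_of_lt (hmin ⟨hx2.1.le, hx2.2.le⟩) hxlt
  have hcne : c ≠ αl := fun h => by rw [h] at hcx; exact lt_irrefl _ hcx
  rcases eq_or_lt_of_le hc.2 with hceq | hcu
  · -- c = αu
    have h3' : 0 ≤ deriv ψ αu := by
      rcases h3 with h | h
      · exfalso; rw [hceq] at hcx; linarith
      · exact h
    -- derivative at right-endpoint min is ≤ 0
    have hmem : (αl - αu) ∈ posTangentConeAt (Set.Icc αl αu) αu := by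
      apply mem_posTangentConeAt_of_segment_subset
      have : αu + (αl - αu) = αl := by ring
      rw [this, segment_symm, segment_eq_Icc hlt.le]
    have hloc : IsLocalMinOn ψ (Set.Icc αl αu) αu := by
      rw [hceq] at hmin
      exact hmin.localize
    have hfd : HasFDerivWithinAt ψ
        (ContinuousLinearMap.smulRight (1 : ℝ →L[ℝ] ℝ) (deriv ψ αu)) (Set.Icc αl αu) αu :=
      ((hψd αu).hasDerivAt.hasDerivWithinAt)
    have := hloc.hasFDerivWithinAt_nonneg hfd hmem
    simp only [ContinuousLinearMap.smulRight_apply, ContinuousLinearMap.one_apply,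
      smul_eq_mul] at this
    have hle : deriv ψ αu ≤ 0 := by nlinarith
    refine ⟨αu, ⟨hlt.le, le_rfl⟩, ?_, le_antisymm hle h3'⟩
    rw [hceq] at hcx; exact hcx.le
  · -- c interior
    have hcl : αl < c := lt_of_le_of_ne hc.1 (Ne.symm hcne)
    have hloc : IsLocalMin ψ c := hmin.isLocalMin (Icc_mem_nhds hcl hcu)
    exact ⟨c, hc, hcx.le, hloc.deriv_eq_zero⟩
end

section
/- The Matérn-5/2 kernel k(p,q) = (1 + √5|p−q|/l + 5|p−q|²/(3l²))·e^{−√5|p−q|/l} on ℝ, with l > 0, is twice continuously differentiable as a function of (p,q), with mixed second derivative ∂²k/∂p∂q (p,q) = (5/(3l²))·(1 + √5|p−q|/l − 5|p−q|²/l²)·e^{−√5|p−q|/l}. -/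
open Real Filter Asymptotics Topology

lemma matern_rsign_mul_abs (x : ℝ) : Real.sign x * |x| = x := by
  rcases lt_trichotomy x 0 with hx | hx | hx
  · rw [Real.sign_of_neg hx, abs_of_neg hx]; ring
  · simp [hx]
  · rw [Real.sign_of_pos hx, abs_of_pos hx]; ring

lemma matern_lemA {ρ : ℝ → ℝ} (h : HasDerivAt ρ 0 0) :
    HasDerivAt (fun y : ℝ => ρ |y|) 0 0 := by
  rw [hasDerivAt_iff_isLittleO] at h ⊢
  simp only [sub_zero, smul_zero, sub_zero, abs_zero] at h ⊢
  have h2 : (fun x : ℝ => ρ |x| - ρ 0) =o[𝓝 0] (fun x : ℝ => |x|) :=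
    h.comp_tendsto (by simpa using continuous_abs.tendsto (0:ℝ))
  calc (fun x : ℝ => ρ |x| - ρ 0) =o[𝓝 (0:ℝ)] (fun x : ℝ => |x|) := h2
    _ =O[𝓝 (0:ℝ)] (fun x : ℝ => x) := by
        apply isBigO_of_le
        intro x; simp [abs_abs]

lemma matern_lemB {ρ D : ℝ → ℝ} (h : ∀ t, HasDerivAt ρ (D t) t) (hD0 : D 0 = 0) (x : ℝ) :
    HasDerivAt (fun y : ℝ => ρ |y|) (Real.sign x * D |x|) x := by
  rcases lt_trichotomy x 0 with hx | hx | hx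
  · have h1 : HasDerivAt (fun y : ℝ => ρ (-y)) (D (-x) * (-1)) x :=
      (h (-x)).comp x (hasDerivAt_neg x)
    have h2 : (fun y : ℝ => ρ |y|) =ᶠ[𝓝 x] (fun y : ℝ => ρ (-y)) := by
      filter_upwards [eventually_lt_nhds hx] with y hy
      rw [abs_of_neg hy]
    have := h1.congr_of_eventuallyEq h2
    refine this.congr_deriv ?_
    rw [Real.sign_of_neg hx, abs_of_neg hx]; ring
  · subst hx
    have := matern_lemA (hD0 ▸ h 0)
    convert this using 1
    simp [Real.sign_zero]
  · have h2 : (fun y : ℝ => ρ |y|) =ᶠ[𝓝 x] ρ := by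
      filter_upwards [eventually_gt_nhds hx] with y hy
      rw [abs_of_pos hy]
    have := (h x).congr_of_eventuallyEq h2
    refine this.congr_deriv ?_
    rw [Real.sign_of_pos hx, abs_of_pos hx]; ring

lemma matern_hasDerivAt_rho (a t : ℝ) :
    HasDerivAt (fun t : ℝ => (1 + a*t) * Real.exp (-(a*t))) (-(a^2*t) * Real.exp (-(a*t))) t := by
  have h1 : HasDerivAt (fun t : ℝ => 1 + a*t) a t := by
    simpa using ((hasDerivAt_id t).const_mul a).const_add 1
  have h2 : HasDerivAt (fun t : ℝ => Real.exp (-(a*t))) (Real.exp (-(a*t)) * (-a)) t := by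
    have : HasDerivAt (fun t : ℝ => -(a*t)) (-a) t := by
      exact (((hasDerivAt_id t).const_mul a).neg).congr_deriv (by simp)
    exact this.exp
  refine (h1.mul h2).congr_deriv ?_; ring

lemma matern_hasDerivAt_h (a t : ℝ) :
    HasDerivAt (fun t : ℝ => (1 + a*t + a^2/3*t^2) * Real.exp (-(a*t)))
      (-(a^2/3)*t*(1+a*t) * Real.exp (-(a*t))) t := by
  have hq : HasDerivAt (fun t : ℝ => t^2) (2*t) t := by
    simpa using hasDerivAt_pow 2 t
  have h1 : HasDerivAt (fun t : ℝ => 1 + a*t + a^2/3*t^2) (a + a^2/3*(2*t)) t := by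
    have h := (((hasDerivAt_id t).const_mul a).const_add 1).add (hq.const_mul (a^2/3))
    refine h.congr_deriv ?_; ring
  have h2 : HasDerivAt (fun t : ℝ => Real.exp (-(a*t))) (Real.exp (-(a*t)) * (-a)) t := by
    have : HasDerivAt (fun t : ℝ => -(a*t)) (-a) t := by
      exact (((hasDerivAt_id t).const_mul a).neg).congr_deriv (by simp)
    exact this.exp
  refine (h1.mul h2).congr_deriv ?_; ring

noncomputable def maternG (a : ℝ) : ℝ → ℝ :=
  fun y => (1 + a*|y| + a^2/3*y^2) * Real.exp (-(a*|y|))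

noncomputable def maternG1 (a : ℝ) : ℝ → ℝ :=
  fun x => -(a^2/3)*x*((1+a*|x|) * Real.exp (-(a*|x|)))

lemma matern_hphi (a x : ℝ) :
    HasDerivAt (fun y : ℝ => (1 + a*|y|) * Real.exp (-(a*|y|)))
      (-(a^2*x) * Real.exp (-(a*|x|))) x := by
  have := matern_lemB (matern_hasDerivAt_rho a) (by simp) x
  convert this using 1
  have hs := matern_rsign_mul_abs x
  linear_combination (a^2 * Real.exp (-(a*|x|))) * hs

lemma matern_hgd (a x : ℝ) : HasDerivAt (maternG a) (maternG1 a x) x := by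
  have := matern_lemB (matern_hasDerivAt_h a) (by simp) x
  have he : (fun y : ℝ => (1 + a*|y| + a^2/3*|y|^2) * Real.exp (-(a*|y|))) = maternG a := by
    funext y; rw [maternG, sq_abs]
  rw [he] at this
  convert this using 1
  have hs := matern_rsign_mul_abs x
  rw [maternG1]
  linear_combination ((a^2/3)*(1+a*|x|) * Real.exp (-(a*|x|))) * hs

lemma matern_hg1 (a x : ℝ) :
    HasDerivAt (maternG1 a)
      (-(a^2/3)*((1+a*|x|) * Real.exp (-(a*|x|)))
        + (a^2/3)*(a^2*x^2) * Real.exp (-(a*|x|))) x := by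
  have hlin : HasDerivAt (fun x : ℝ => -(a^2/3)*x) (-(a^2/3)) x := by
    simpa using (hasDerivAt_id x).const_mul (-(a^2/3))
  have h := hlin.mul (matern_hphi a x)
  refine h.congr_deriv ?_; ring

lemma maternG_contDiff (a : ℝ) : ContDiff ℝ 2 (maternG a) := by
  rw [show (2 : WithTop ℕ∞) = 1 + 1 from rfl, contDiff_succ_iff_deriv]
  refine ⟨fun x => (matern_hgd a x).differentiableAt, by simp, ?_⟩
  have hd : deriv (maternG a) = maternG1 a := funext fun x => (matern_hgd a x).deriv
  rw [hd, contDiff_one_iff_deriv]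
  refine ⟨fun x => (matern_hg1 a x).differentiableAt, ?_⟩
  have hd1 : deriv (maternG1 a) = fun x =>
      -(a^2/3)*((1+a*|x|) * Real.exp (-(a*|x|))) + (a^2/3)*(a^2*x^2) * Real.exp (-(a*|x|)) :=
    funext fun x => (matern_hg1 a x).deriv
  rw [hd1]
  fun_prop

theorem stmt_11 (l : ℝ) (hl : 0 < l)
    (k : ℝ → ℝ → ℝ)
    (hk : k = fun p q =>
      (1 + Real.sqrt 5 * |p - q| / l + 5 * |p - q| ^ 2 / (3 * l ^ 2)) *
        Real.exp (-(Real.sqrt 5 * |p - q| / l))) :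
    ContDiff ℝ 2 (fun pq : ℝ × ℝ => k pq.1 pq.2) ∧
      ∀ p q : ℝ,
        deriv (fun q' => deriv (fun p' => k p' q') p) q =
          5 / (3 * l ^ 2) *
            (1 + Real.sqrt 5 * |p - q| / l - 5 * |p - q| ^ 2 / l ^ 2) *
            Real.exp (-(Real.sqrt 5 * |p - q| / l)) := by
  have hl0 : l ≠ 0 := ne_of_gt hl
  have h5 : Real.sqrt 5 ^ 2 = 5 := Real.sq_sqrt (by norm_num)
  set a : ℝ := Real.sqrt 5 / l with ha
  have ha2 : a^2 = 5 / l^2 := by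
    rw [ha, div_pow, Real.sq_sqrt (by norm_num : (0:ℝ) ≤ 5)]
  have harg : ∀ x : ℝ, Real.sqrt 5 * |x| / l = a * |x| := by
    intro x; rw [ha]; ring
  have hkg : (fun pq : ℝ × ℝ => k pq.1 pq.2) = (fun pq : ℝ × ℝ => maternG a (pq.1 - pq.2)) := by
    funext pq
    simp only [hk, maternG]
    set x := pq.1 - pq.2 with hx
    rw [sq_abs, harg x]
    congr 1
    linear_combination (-(x^2)/(3*l^2)) * h5
  constructor
  · rw [hkg]
    exact (maternG_contDiff a).comp (contDiff_fst.sub contDiff_snd)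
  · intro p q
    have hk1 : ∀ p' q' : ℝ, k p' q' = maternG a (p' - q') := by
      intro p' q'; exact congrFun hkg (p', q')
    have hinner : (fun q' => deriv (fun p' => k p' q') p) = fun q' => maternG1 a (p - q') := by
      funext q'
      have hfun : (fun p' => k p' q') = fun p' => maternG a (p' - q') :=
        funext fun p' => hk1 p' q'
      rw [hfun]
      have H : HasDerivAt (fun p' => maternG a (p' - q')) (maternG1 a (p - q')) p := by
        exact ((matern_hgd a (p - q')).comp p ((hasDerivAt_id p).sub_const q')).congr_deriv (g' := maternG1 a (p - q')) (by simp)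
      exact H.deriv
    rw [hinner]
    have H : HasDerivAt (fun q' => maternG1 a (p - q'))
        ((-(a^2/3)*((1+a*|p-q|) * Real.exp (-(a*|p-q|)))
          + (a^2/3)*(a^2*(p-q)^2) * Real.exp (-(a*|p-q|))) * (-1)) q := by
      have hsub : HasDerivAt (fun q' : ℝ => p - q') (-1) q := by
        simpa using (hasDerivAt_id q).const_sub p
      exact (matern_hg1 a (p - q)).comp q hsub
    rw [H.deriv, sq_abs, harg (p - q)]
    set E := Real.exp (-(a*|p-q|)) with hE
    linear_combination ((1+a*|p-q|)*E/(3*l^2) - (p-q)^2*E*(Real.sqrt 5^2+5)/(3*l^4)) * h5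
end

section
/- Let φ be continuously differentiable and bounded below, with φ'(0) < 0, and 0 < μ < η < 1. Then there exists α⋆ > 0 satisfying the strong Wolfe conditions: φ(α⋆) ≤ φ(0) + μ·φ'(0)·α⋆ and |φ'(α⋆)| ≤ η·|φ'(0)|. -/
theorem stmt_15 (φ : ℝ → ℝ) (hφ : ContDiff ℝ 1 φ)
    (hbdd : ∃ m : ℝ, ∀ α : ℝ, 0 < α → m ≤ φ α)
    (hd : deriv φ 0 < 0)
    (μ η : ℝ) (hμ0 : 0 < μ) (hμη : μ < η) (hη1 : η < 1) :
    ∃ αs : ℝ, 0 < αs ∧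
      φ αs ≤ φ 0 + μ * deriv φ 0 * αs ∧
      |deriv φ αs| ≤ η * |deriv φ 0| := by
  obtain ⟨m, hm⟩ := hbdd
  set d0 := deriv φ 0 with hd0def
  set g : ℝ → ℝ := fun α => φ α - φ 0 - μ * d0 * α with hg
  have hφd : Differentiable ℝ φ := hφ.differentiable one_ne_zero
  have hgdiff : Differentiable ℝ g := by
    apply Differentiable.sub
    · exact hφd.sub_const _
    · exact (differentiable_const _).mul differentiable_id
  have hgd : ∀ x, deriv g x = deriv φ x - μ * d0 := by
    intro x
    have h1 : HasDerivAt φ (deriv φ x) x := (hφd x).hasDerivAt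
    have h2 : HasDerivAt (fun α : ℝ => μ * d0 * α) (μ * d0) x := by
      simpa using (hasDerivAt_id x).const_mul (μ * d0)
    have : HasDerivAt g (deriv φ x - μ * d0) x := by
      exact (h1.sub_const (φ 0)).sub h2
    exact this.deriv
  have hgcont : Continuous g := hgdiff.continuous
  have hdcont : Continuous (deriv φ) := hφ.continuous_deriv le_rfl
  have hg0 : g 0 = 0 := by simp [hg]
  -- choose ε > 0 with deriv g < 0 on [0, ε]
  have hopen : IsOpen {x : ℝ | deriv φ x - μ * d0 < 0} :=
    isOpen_lt (hdcont.sub continuous_const) continuous_const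
  have h0mem : (0 : ℝ) ∈ {x : ℝ | deriv φ x - μ * d0 < 0} := by
    simp only [Set.mem_setOf_eq, ← hd0def]
    nlinarith
  obtain ⟨r, hr0, hball⟩ := Metric.isOpen_iff.1 hopen 0 h0mem
  set ε := r / 2 with hε
  have hε0 : 0 < ε := by positivity
  have hIccsub : Set.Icc (0 : ℝ) ε ⊆ {x | deriv φ x - μ * d0 < 0} := by
    intro x hx
    apply hball
    rw [Metric.mem_ball, Real.dist_eq, sub_zero, abs_of_nonneg hx.1]
    have := hx.2
    linarith
  have hanti : StrictAntiOn g (Set.Icc 0 ε) := by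
    apply strictAntiOn_of_deriv_neg (convex_Icc 0 ε) hgcont.continuousOn
    intro x hx
    rw [interior_Icc] at hx
    rw [hgd]
    exact hIccsub ⟨hx.1.le, hx.2.le⟩
  have hgε : g ε < 0 := by
    have := hanti (Set.left_mem_Icc.2 hε0.le) (Set.right_mem_Icc.2 hε0.le) hε0
    rwa [hg0] at this
  -- a point where g is positive
  have hmd0 : μ * d0 < 0 := mul_neg_of_pos_of_neg hμ0 hd
  set A := (m - φ 0) / (μ * d0) with hA
  set α₁ := max (ε + 1) (A + 1) with hα₁
  have hα₁ε : ε < α₁ := lt_of_lt_of_le (by linarith) (le_max_left _ _)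
  have hα₁0 : 0 < α₁ := lt_trans hε0 hα₁ε
  have hα₁A : A < α₁ := lt_of_lt_of_le (by linarith) (le_max_right _ _)
  have hgα₁ : 0 < g α₁ := by
    have h1 : m ≤ φ α₁ := hm α₁ hα₁0
    have h2 : μ * d0 * α₁ < μ * d0 * A := by
      exact mul_lt_mul_of_neg_left hα₁A hmd0
    have h3 : μ * d0 * A = m - φ 0 := by
      rw [hA, mul_div_cancel₀ _ (ne_of_lt hmd0)]
    simp only [hg]
    nlinarith
  -- first zero of g past ε
  set S := {α : ℝ | ε ≤ α ∧ g α = 0} with hS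
  have hSclosed : IsClosed S := by
    have : S = {α : ℝ | ε ≤ α} ∩ g ⁻¹' {0} := by
      ext x; simp [hS]
    rw [this]
    exact (isClosed_le continuous_const continuous_id).inter
      (isClosed_singleton.preimage hgcont)
  have hSne : S.Nonempty := by
    have h0mem' : (0 : ℝ) ∈ Set.Icc (g ε) (g α₁) := ⟨hgε.le, hgα₁.le⟩
    obtain ⟨β, hβ, hβ0⟩ := intermediate_value_Icc hα₁ε.le hgcont.continuousOn h0mem'
    exact ⟨β, hβ.1, hβ0⟩
  have hSbdd : BddBelow S := ⟨ε, fun x hx => hx.1⟩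
  set z := sInf S with hz
  have hzmem : z ∈ S := hSclosed.csInf_mem hSne hSbdd
  have hzε : ε ≤ z := hzmem.1
  have hgz : g z = 0 := hzmem.2
  have hz0 : 0 < z := lt_of_lt_of_le hε0 hzε
  -- g < 0 on (0, z)
  have hneg : ∀ α ∈ Set.Ioo (0 : ℝ) z, g α < 0 := by
    intro α hα
    by_cases hcase : α ≤ ε
    · have := hanti (Set.left_mem_Icc.2 hε0.le) ⟨hα.1.le, hcase⟩ hα.1
      rwa [hg0] at this
    · push_neg at hcase
      by_contra hcon
      push_neg at hcon
      have h0mem' : (0 : ℝ) ∈ Set.Icc (g ε) (g α) := ⟨hgε.le, hcon⟩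
      obtain ⟨β, hβ, hβ0⟩ := intermediate_value_Icc hcase.le hgcont.continuousOn h0mem'
      have hβS : β ∈ S := ⟨hβ.1, hβ0⟩
      have := csInf_le hSbdd hβS
      have : z ≤ α := le_trans this hβ.2
      exact absurd hα.2 (not_lt.2 this)
  -- Rolle on [0, z]
  obtain ⟨c, hc, hc0⟩ := exists_deriv_eq_zero hz0 hgcont.continuousOn (hg0.trans hgz.symm)
  have hdc : deriv φ c = μ * d0 := by
    have := hgd c
    rw [hc0] at this
    linarith
  refine ⟨c, hc.1, ?_, ?_⟩
  · have := hneg c hc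
    simp only [hg] at this
    linarith
  · rw [hdc, abs_mul, abs_of_pos hμ0]
    have habs : 0 ≤ |d0| := abs_nonneg _
    nlinarith
end

section
/- Let ψ: ℝ → ℝ be continuously differentiable with ψ(αₗ) ≤ 0 and ψ'(αₗ)·(αᵤ − αₗ) < 0 and ψ(αₗ) ≤ ψ(αᵤ), where αₗ ≠ αᵤ. Then the minimum of ψ over the closed interval with endpoints αₗ, αᵤ is attained at an interior point α⋆, and at that point ψ'(α⋆) = 0 and ψ(α⋆) ≤ ψ(αₗ) ≤ 0. -/
theorem stmt_16 (ψ : ℝ → ℝ) (hψ : ContDiff ℝ 1 ψ)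
    (αl αu : ℝ) (hne : αl ≠ αu)
    (h1 : ψ αl ≤ 0) (h2 : deriv ψ αl * (αu - αl) < 0) (h3 : ψ αl ≤ ψ αu) :
    ∃ αs ∈ Set.Ioo (min αl αu) (max αl αu),
      (∀ x ∈ Set.uIcc αl αu, ψ αs ≤ ψ x) ∧
      deriv ψ αs = 0 ∧ ψ αs ≤ ψ αl ∧ ψ αl ≤ 0 := by
  have hcont : Continuous ψ := hψ.continuous
  have hdiff : Differentiable ℝ ψ := hψ.differentiable one_ne_zero
  obtain ⟨αs, hsmem, hmin⟩ := isCompact_uIcc.exists_isMinOn (Set.nonempty_uIcc)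
    hcont.continuousOn
  -- αl is not a minimizer
  have key : ¬ IsMinOn ψ (Set.uIcc αl αu) αl := by
    intro hm
    have hseg : segment ℝ αl αu ⊆ Set.uIcc αl αu := by
      rw [segment_eq_uIcc]
    have hy : αu - αl ∈ posTangentConeAt (Set.uIcc αl αu) αl :=
      sub_mem_posTangentConeAt_of_segment_subset hseg
    have hloc : IsLocalMinOn ψ (Set.uIcc αl αu) αl :=
      hm.localize
    have hfd : HasFDerivWithinAt ψ
        (ContinuousLinearMap.smulRight (1 : ℝ →L[ℝ] ℝ) (deriv ψ αl))
        (Set.uIcc αl αu) αl :=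
      ((hdiff αl).hasDerivAt.hasFDerivAt).hasFDerivWithinAt
    have := hloc.hasFDerivWithinAt_nonneg hfd hy
    simp only [ContinuousLinearMap.smulRight_apply, ContinuousLinearMap.one_apply,
      smul_eq_mul] at this
    nlinarith
  rw [isMinOn_iff] at key
  push_neg at key
  obtain ⟨x, hx, hxlt⟩ := key
  have hlt : ψ αs < ψ αl := lt_of_le_of_lt (hmin hx) hxlt
  have hne1 : αs ≠ αl := fun h => absurd hlt (by rw [h]; exact lt_irrefl _)
  have hne2 : αs ≠ αu := fun h => absurd hlt (by rw [h]; exact not_lt.2 h3)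
  have hIcc : αs ∈ Set.Icc (min αl αu) (max αl αu) := hsmem
  have hioo : αs ∈ Set.Ioo (min αl αu) (max αl αu) := by
    rcases le_or_gt αl αu with h | h
    · simp only [min_eq_left h, max_eq_right h] at hIcc ⊢ <;> try skip
      constructor
      · rcases lt_or_eq_of_le hIcc.1 with h' | h'
        · simpa [min_eq_left h] using h'
        · exact absurd h'.symm (by simpa [min_eq_left h] using hne1)
      · rcases lt_or_eq_of_le hIcc.2 with h' | h'
        · simpa [max_eq_right h] using h'
        · exact absurd h' (by simpa [max_eq_right h] using hne2)
    · constructor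
      · rcases lt_or_eq_of_le hIcc.1 with h' | h'
        · exact h'
        · exact absurd h'.symm (by simp [min_eq_right h.le, hne2])
      · rcases lt_or_eq_of_le hIcc.2 with h' | h'
        · exact h'
        · exact absurd h' (by simp [max_eq_left h.le, hne1])
  refine ⟨αs, hioo, fun y hy => hmin hy, ?_, hlt.le, h1⟩
  have hnb : Set.uIcc αl αu ∈ nhds αs :=
    Filter.mem_of_superset (isOpen_Ioo.mem_nhds hioo) Set.Ioo_subset_Icc_self
  exact (hmin.isLocalMin hnb).deriv_eq_zero
end

section
/- Let φ_min be a strict lower bound for the continuously differentiable function φ with φ'(0) < 0, let μ ∈ (0,1), c > 1, α_max > 0, and α₀ = min(1, α_max). Consider the iteration starting from [αₗ, αᵤ] = [0, α₀] that repeatedly replaces [αₗ, αᵤ] by [αᵤ, min(c·αᵤ, α_max)]. Then the number of updates until αᵤ = α_max or ψ(αᵤ) ≥ ψ(αₗ) or ψ'(αᵤ) ≥ 0 is at most ⌈(1/α₀)·log_c(min((1/μ)·(φ_min − φ(0))/φ'(0), α_max))⌉. -/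
theorem stmt_18 (φ : ℝ → ℝ) (hφ : ContDiff ℝ 1 φ)
    (φmin : ℝ) (hbound : ∀ α : ℝ, φmin < φ α)
    (hd : deriv φ 0 < 0)
    (μ : ℝ) (hμ0 : 0 < μ) (hμ1 : μ < 1)
    (c αmax : ℝ) (hc : 1 < c) (hαmax : 0 < αmax)
    (α₀ : ℝ) (hα₀ : α₀ = min 1 αmax)
    (ψ : ℝ → ℝ) (hψ : ψ = fun α => φ α - (φ 0 + μ * deriv φ 0 * α))
    (u lo : ℕ → ℝ)
    (hu0 : u 0 = α₀) (hu : ∀ k, u (k + 1) = min (c * u k) αmax)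
    (hlo0 : lo 0 = 0) (hlo : ∀ k, lo (k + 1) = u k)
    (N : ℕ)
    (hN : N = ⌈(1 / α₀) *
      Real.logb c (min ((1 / μ) * ((φmin - φ 0) / deriv φ 0)) αmax)⌉₊) :
    ∃ k ≤ N, u k = αmax ∨ ψ (lo k) ≤ ψ (u k) ∨ 0 ≤ deriv ψ (u k) := by
  by_contra hcon
  push_neg at hcon
  -- Case 1: αmax ≤ 1, then u 0 = αmax already.
  rcases le_or_gt αmax 1 with hle | h1max
  · have h0 : u 0 = αmax := by rw [hu0, hα₀, min_eq_right hle]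
    exact (hcon 0 (Nat.zero_le _)).1 h0
  -- Case 2: αmax > 1, so α₀ = 1.
  have hα1 : α₀ = 1 := by rw [hα₀, min_eq_left h1max.le]
  set d := deriv φ 0 with hdd
  set αb : ℝ := (1 / μ) * ((φmin - φ 0) / d) with hαb
  -- basic positivity and bound
  have hub : ∀ k, 0 < u k ∧ u k ≤ αmax := by
    intro k
    induction k with
    | zero => rw [hu0, hα1]; exact ⟨one_pos, h1max.le⟩
    | succ n ih =>
      rw [hu n]
      constructor
      · exact lt_min (by nlinarith [ih.1]) hαmax
      · exact min_le_right _ _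
  -- monotone
  have hmono : Monotone u := by
    apply monotone_nat_of_le_succ
    intro n
    rw [hu n]
    exact le_min (by nlinarith [(hub n).1]) (hub n).2
  -- ψ (u k) < 0 for all k ≤ N
  have hψ0 : ψ 0 = 0 := by rw [hψ]; simp
  have hneg : ∀ k ≤ N, ψ (u k) < 0 := by
    intro k
    induction k with
    | zero =>
      intro hk
      have := (hcon 0 hk).2.1
      rw [hlo0, hψ0] at this; exact this
    | succ n ih =>
      intro hk
      have h1 := (hcon (n + 1) hk).2.1
      rw [hlo n] at h1
      exact h1.trans (ih (Nat.le_of_succ_le hk))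
  -- hence u N < αb
  have hμd : μ * d < 0 := mul_neg_of_pos_of_neg hμ0 hd
  have hNb : u N < αb := by
    have h1 := hneg N le_rfl
    rw [hψ] at h1
    simp only at h1
    have h2 := hbound (u N)
    have heq : αb = (φmin - φ 0) / (μ * d) := by
      rw [hαb]; field_simp
    rw [heq, lt_div_iff_of_neg hμd]
    nlinarith
  -- and u N < αmax
  have hNmax : u N < αmax := lt_of_le_of_ne (hub N).2 ((hcon N le_rfl).1)
  -- geometric formula
  have hform : ∀ k ≤ N, u k = c ^ k := by
    intro k
    induction k with
    | zero => intro _; rw [hu0, hα1, pow_zero]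
    | succ n ih =>
      intro hk
      have hn := Nat.le_of_succ_le hk
      have hlt : u (n + 1) < αmax := lt_of_le_of_lt (hmono (Nat.le_of_lt_succ (Nat.lt_succ_of_le hk))) hNmax
      rw [hu n] at hlt ⊢
      have : c * u n < αmax := by
        by_contra hge
        push_neg at hge
        rw [min_eq_right hge] at hlt
        exact lt_irrefl _ hlt
      rw [min_eq_left this.le, ih hn, pow_succ, mul_comm]
  -- now the counting contradiction
  have hm : u N < min αb αmax := lt_min hNb hNmax
  have hcN : (c : ℝ) ^ N < min αb αmax := by rw [← hform N le_rfl]; exact hm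
  have hpos : (0 : ℝ) < c ^ N := pow_pos (lt_trans one_pos hc) N
  have hlog : (N : ℝ) < Real.logb c (min αb αmax) := by
    have := Real.logb_lt_logb hc hpos hcN
    rwa [Real.logb_pow, Real.logb_self_eq_one hc, mul_one] at this
  have hceil : Real.logb c (min αb αmax) ≤ (N : ℝ) := by
    have h1 : (1 / α₀) * Real.logb c (min αb αmax) ≤ (N : ℝ) := by
      rw [hN]; exact_mod_cast Nat.le_ceil _
    rwa [hα1, one_div_one, one_mul] at h1
  linarith
end
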